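/- Let $\mathcal{A}$ be an abelian category in which every object is Noetherian, and let $\mathcal{B}$ be a topologizing subcategory (a nonempty full subcategory closed under finite direct sums, subobjects, and quotient objects). Then the following are equivalent: (1) every object $x$ of $\mathcal{A}$ admits a finite filtration $0 = x_n \le x_{n-1} \le \cdots \le x_0 = x$ by subobjects such that each quotient $x_i/x_{i+1}$ is isomorphic to an object of $\mathcal{B}$; (2) the Serre radical of $\mathcal{B}$ in $\mathcal{A}$ (the smallest Serre subcategory, i.e., extension-closed topologizing subcategory, containing $\mathcal{B}$) equals all of $\mathcal{A}$. -/

import Mathlib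

open CategoryTheory Limits

variable {C : Type} [Category C] [Abelian C]

/-- A topologizing subcategory: a nonempty, isomorphism-closed full subcategory (given by
a predicate on objects) closed under finite direct sums, subobjects and quotient
objects. -/
def IsTopologizing (P : C → Prop) : Prop :=
  (∃ X, P X) ∧
  (∀ {X Y : C}, (X ≅ Y) → P X → P Y) ∧
  (∀ X Y : C, P X → P Y → P (X ⊞ Y)) ∧
  (∀ {X Y : C} (f : X ⟶ Y), Mono f → P Y → P X) ∧
  (∀ {X Y : C} (f : X ⟶ Y), Epi f → P X → P Y)

/-- A Serre subcategory: an extension-closed topologizing subcategory. -/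
def IsSerre (P : C → Prop) : Prop :=
  IsTopologizing P ∧
  ∀ S : ShortComplex C, S.ShortExact → P S.X₁ → P S.X₃ → P S.X₂

/-- The Serre radical of `P`: the smallest Serre subcategory containing `P`
(the intersection of all Serre subcategories containing `P`). -/
def serreRadical (P : C → Prop) : C → Prop := fun X =>
  ∀ Q : C → Prop, IsSerre Q → (∀ Y : C, P Y → Q Y) → Q X

/-- `X` has a finite filtration by subobjects whose successive quotients lie in `P`. -/
def HasDevissageFiltration (P : C → Prop) (X : C) : Prop :=
  ∃ (n : ℕ) (s : Fin (n + 1) → Subobject X)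
    (hmono : ∀ i : Fin n, s i.succ ≤ s i.castSucc),
    s 0 = ⊤ ∧ s (Fin.last n) = ⊥ ∧
    ∀ i : Fin n, ∃ b : C, P b ∧
      Nonempty ((cokernel (Subobject.ofLE (s i.succ) (s i.castSucc) (hmono i))) ≅ b)

open ZeroObject

namespace DevissageAux

/-- Auxiliary inductive predicate: `X` is built from `0` by successive extensions whose
quotients lie in `P`. -/
inductive Dev (P : C → Prop) : C → Prop
  | zero (X : C) (h : IsZero X) : Dev P X
  | step (S : ShortComplex C) (hS : S.ShortExact) (h1 : Dev P S.X₁) (h3 : P S.X₃) :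
      Dev P S.X₂

variable {P : C → Prop}

lemma sesOfMono {A X : C} (u : A ⟶ X) [Mono u] :
    (ShortComplex.mk u (cokernel.π u) (cokernel.condition u)).ShortExact :=
  ShortComplex.ShortExact.mk
    (ShortComplex.exact_of_g_is_cokernel _ (cokernelIsCokernel u))

open scoped Pseudoelement in
lemma pseudo_id_apply {X : C} (a : Abelian.Pseudoelement X) :
    Abelian.Pseudoelement.pseudoApply (𝟙 X) a = a :=
  Quotient.inductionOn a fun x => by
    rw [Abelian.Pseudoelement.pseudoApply_mk']
    exact Quotient.sound ⟨x.left, 𝟙 _, 𝟙 _, inferInstance, inferInstance, by simp⟩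

lemma Dev.of_iso {X Y : C} (e : X ≅ Y) (h : Dev P X) : Dev P Y := by
  cases h with
  | zero X h => exact Dev.zero Y (h.of_iso e.symm)
  | step S hS h1 h3 =>
    have := hS.mono_f; have := hS.epi_g
    let S' : ShortComplex C := ShortComplex.mk (S.f ≫ e.hom) (e.inv ≫ S.g)
      (by simp [reassoc_of% S.zero])
    refine Dev.step S' ?_ h1 h3
    have eiso : S ≅ S' := ShortComplex.isoMk (Iso.refl S.X₁) e (Iso.refl S.X₃)
      (by simp [S']) (by simp [S'])
    exact ShortComplex.shortExact_of_iso eiso hS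

lemma monoZeroFromZero {Z X : C} (hZ : IsZero Z) (f : Z ⟶ X) : Mono f :=
  ⟨fun g h _ => hZ.eq_of_tgt g h⟩

lemma Dev.of_P (hP : IsTopologizing P) {X : C} (h : P X) : Dev P X := by
  have : Mono (0 : (0 : C) ⟶ X) := monoZeroFromZero (isZero_zero C) _
  exact Dev.step _ (sesOfMono (0 : (0 : C) ⟶ X)) (Dev.zero _ (isZero_zero C))
    (hP.2.1 cokernelZeroIsoTarget.symm h)

lemma Dev.serre {X : C} (h : Dev P X) (Q : C → Prop) (hQ : IsSerre Q)
    (hPQ : ∀ Y : C, P Y → Q Y) : Q X := by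
  induction h with
  | zero X hX =>
    obtain ⟨W, hW⟩ := hQ.1.1
    exact hQ.1.2.2.2.1 (hX.to_ W) (monoZeroFromZero hX _) hW
  | step S hS h1 h3 ih => exact hQ.2 S hS ih (hPQ _ h3)

open scoped Pseudoelement in
open Abelian.Pseudoelement in
lemma Dev.of_mono (hP : IsTopologizing P) {X : C} (h : Dev P X) :
    ∀ {Y : C} (m : Y ⟶ X), Mono m → Dev P Y := by
  induction h with
  | zero X hX =>
    intro Y m hm
    refine Dev.zero Y ?_
    rw [IsZero.iff_id_eq_zero]
    have hm0 : m = 0 := hX.eq_zero_of_tgt m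
    rw [← cancel_mono m, hm0, comp_zero, zero_comp]
  | step S hS h1 h3 ih =>
    intro Y m hm
    have := hS.mono_f; have := hS.epi_g
    set w : Y ⟶ S.X₃ := m ≫ S.g with hw
    have hzero : kernel.ι w ≫ factorThruImage w = 0 := by
      rw [← cancel_mono (image.ι w), Category.assoc, image.fac, zero_comp]
      exact kernel.condition w
    have hses : (ShortComplex.mk (kernel.ι w) (factorThruImage w) hzero).ShortExact := by
      refine ShortComplex.ShortExact.mk ?_
      apply Abelian.Pseudoelement.exact_of_pseudo_exact
      intro b hb
      have hwb : w b = 0 := by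
        rw [← image.fac w, Abelian.Pseudoelement.comp_apply, hb, apply_zero]
      exact Abelian.Pseudoelement.pseudo_exact_of_exact
        (ShortComplex.exact_of_f_is_kernel
          (ShortComplex.mk (kernel.ι w) w (kernel.condition w)) (kernelIsKernel w)) b hwb
    have hlz : (kernel.ι w ≫ m) ≫ S.g = 0 := by
      rw [Category.assoc, ← hw]; exact kernel.condition w
    have hml : Mono (kernel.ι w ≫ m) := mono_comp _ _
    have hl := hS.exact.lift_f (kernel.ι w ≫ m) hlz
    have : Mono (hS.exact.lift (kernel.ι w ≫ m) hlz) := mono_of_mono_fac hl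
    exact Dev.step _ hses (ih _ this) (hP.2.2.2.1 (image.ι w) inferInstance h3)

open scoped Pseudoelement in
open Abelian.Pseudoelement in
lemma Dev.of_epi (hP : IsTopologizing P) {X : C} (h : Dev P X) :
    ∀ {Y : C} (e : X ⟶ Y), Epi e → Dev P Y := by
  induction h with
  | zero X hX =>
    intro Y e he
    refine Dev.zero Y ?_
    rw [IsZero.iff_id_eq_zero]
    have he0 : e = 0 := hX.eq_zero_of_src e
    rw [← cancel_epi e, he0, comp_zero, zero_comp]
  | step S hS h1 h3 ih =>
    intro Y e he
    have := hS.mono_f; have := hS.epi_g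
    set u : S.X₁ ⟶ Y := S.f ≫ e with hu
    have hdI : Dev P (image u) := ih (factorThruImage u) inferInstance
    have hcz : S.f ≫ e ≫ cokernel.π u = 0 := by
      rw [← Category.assoc, ← hu]; exact cokernel.condition u
    have hφ := hS.exact.g_desc (e ≫ cokernel.π u) hcz
    have hepi : Epi (e ≫ cokernel.π u) := epi_comp _ _
    have : Epi (hS.exact.desc (e ≫ cokernel.π u) hcz) := epi_of_epi_fac hφ
    have hPcoku : P (cokernel u) :=
      hP.2.2.2.2 (hS.exact.desc (e ≫ cokernel.π u) hcz) this h3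
    have hPcok : P (cokernel (image.ι u)) := hP.2.1 (cokernelImageι u).symm hPcoku
    exact Dev.step _ (sesOfMono (image.ι u)) hdI hPcok

open scoped Pseudoelement in
open Abelian.Pseudoelement in
lemma Dev.ext_aux (hP : IsTopologizing P) {Z : C} (h3 : Dev P Z) :
    ∀ (S : ShortComplex C), S.ShortExact → (S.X₃ ≅ Z) → Dev P S.X₁ → Dev P S.X₂ := by
  induction h3 with
  | zero Z hZ =>
    intro S hS e h1
    have := hS.mono_f; have := hS.epi_g
    have hx3 : IsZero S.X₃ := hZ.of_iso e
    have hepi : Epi S.f := by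
      refine Preadditive.epi_of_cancel_zero _ (fun {W} h hw => ?_)
      have h0 : hS.exact.desc h hw = 0 := hx3.eq_zero_of_src _
      rw [← hS.exact.g_desc h hw, h0, comp_zero]
    have : IsIso S.f := isIso_of_mono_of_epi _
    exact h1.of_iso (asIso S.f)
  | step T hT h1' h3' ih =>
    intro S hS e h1
    have := hS.mono_f; have := hS.epi_g; have := hT.mono_f; have := hT.epi_g
    set g' : S.X₂ ⟶ T.X₃ := S.g ≫ e.hom ≫ T.g with hg'
    have hepig' : Epi g' := by rw [hg']; infer_instance
    have hfz : S.f ≫ g' = 0 := by rw [hg', reassoc_of% S.zero, zero_comp]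
    set f' : S.X₁ ⟶ kernel g' := kernel.lift g' S.f hfz with hf'def
    have hf' : f' ≫ kernel.ι g' = S.f := kernel.lift_ι g' S.f hfz
    have hmf' : Mono f' := mono_of_mono_fac hf'
    have hpw : (kernel.ι g' ≫ S.g ≫ e.hom) ≫ T.g = 0 := by
      simpa only [Category.assoc, hg'] using kernel.condition g'
    set p : kernel g' ⟶ T.X₁ := hT.exact.lift (kernel.ι g' ≫ S.g ≫ e.hom) hpw with hpdef
    have hp : p ≫ T.f = kernel.ι g' ≫ S.g ≫ e.hom := hT.exact.lift_f _ _
    have hz : f' ≫ p = 0 := by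
      rw [← cancel_mono T.f, Category.assoc, hp, zero_comp, ← Category.assoc, hf',
        reassoc_of% S.zero, zero_comp]
    have hepip : Epi p := by
      apply epi_of_pseudo_surjective
      intro t1
      obtain ⟨x, hx⟩ := pseudo_surjective_of_epi S.g (e.inv (T.f t1))
      have hgx : g' x = 0 := by
        have h1' : (S.g ≫ e.hom ≫ T.g) x = T.g (e.hom (S.g x)) := by
          rw [Abelian.Pseudoelement.comp_apply, Abelian.Pseudoelement.comp_apply]
        have h2' : e.hom (e.inv (T.f t1)) = T.f t1 := by
          rw [← Abelian.Pseudoelement.comp_apply, e.inv_hom_id]; exact pseudo_id_apply _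
        have h3'' : T.g (T.f t1) = 0 := by
          rw [← Abelian.Pseudoelement.comp_apply, T.zero, Abelian.Pseudoelement.zero_apply]
        rw [hg', h1', hx, h2', h3'']
      obtain ⟨k, hk⟩ := pseudo_exact_of_exact
        (ShortComplex.exact_of_f_is_kernel
          (ShortComplex.mk (kernel.ι g') g' (kernel.condition g')) (kernelIsKernel g')) x hgx
      refine ⟨k, pseudo_injective_of_mono T.f ?_⟩
      have : (p ≫ T.f) k = T.f (p k) := Abelian.Pseudoelement.comp_apply _ _ _
      rw [← this, hp, Abelian.Pseudoelement.comp_apply, Abelian.Pseudoelement.comp_apply, hk, hx, ← Abelian.Pseudoelement.comp_apply, e.inv_hom_id]; exact pseudo_id_apply _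
    have hSES1 : (ShortComplex.mk f' p hz).ShortExact := by
      refine ShortComplex.ShortExact.mk ?_
      apply exact_of_pseudo_exact
      intro k hk
      have hgk : S.g (kernel.ι g' k) = 0 := by
        apply pseudo_injective_of_mono e.hom
        have : (kernel.ι g' ≫ S.g ≫ e.hom) k = e.hom (S.g (kernel.ι g' k)) := by
          rw [Abelian.Pseudoelement.comp_apply, Abelian.Pseudoelement.comp_apply]
        rw [← this, ← hp, Abelian.Pseudoelement.comp_apply, hk, apply_zero, apply_zero]
      obtain ⟨a, ha⟩ := pseudo_exact_of_exact hS.exact (kernel.ι g' k) hgk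
      refine ⟨a, pseudo_injective_of_mono (kernel.ι g') ?_⟩
      rw [← Abelian.Pseudoelement.comp_apply, hf', ha]
    have hSES2 : (ShortComplex.mk (kernel.ι g') g' (kernel.condition g')).ShortExact :=
      ShortComplex.ShortExact.mk
        (ShortComplex.exact_of_f_is_kernel _ (kernelIsKernel g'))
    have hfin := Dev.step _ hSES2 (ih (ShortComplex.mk f' p hz) hSES1 (Iso.refl _) h1) h3'
    exact hfin

lemma Dev.isSerre (hP : IsTopologizing P) : IsSerre (Dev P) := by
  refine ⟨⟨⟨0, Dev.zero _ (isZero_zero C)⟩,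
    fun e h => h.of_iso e,
    fun X Y hX hY => ?_,
    fun f hf h => h.of_mono hP f hf,
    fun f hf h => h.of_epi hP f hf⟩,
    fun S hS h1 h3 => Dev.ext_aux hP h3 S hS (Iso.refl _) h1⟩
  -- biproducts
  have hz : biprod.inl ≫ (biprod.snd : X ⊞ Y ⟶ Y) = 0 := biprod.inl_snd
  have hsplit : (ShortComplex.mk (biprod.inl : X ⟶ X ⊞ Y) biprod.snd hz).Splitting :=
    { r := biprod.fst
      s := biprod.inr
      f_r := by simp
      s_g := by simp
      id := by simp [biprod.total] }
  exact Dev.ext_aux hP hY _ hsplit.shortExact (Iso.refl _) hX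

-- Comparison of cokernels of `ofLE` maps

lemma cok_ofLE_top {X₁ X₂ : C} (f : X₁ ⟶ X₂) [Mono f]
    (h : Subobject.mk f ≤ (⊤ : Subobject X₂)) :
    Nonempty (cokernel (Subobject.ofLE (Subobject.mk f) ⊤ h) ≅ cokernel f) := by
  refine ⟨cokernel.mapIso _ f (Subobject.underlyingIso f)
    (asIso ((⊤ : Subobject X₂).arrow)) ?_⟩
  simp [Subobject.ofLE_arrow]

lemma cok_ofLE_push {X₁ X₂ : C} (f : X₁ ⟶ X₂) [Mono f] (A B : Subobject X₁) (hAB : A ≤ B)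
    (h : Subobject.mk (A.arrow ≫ f) ≤ Subobject.mk (B.arrow ≫ f)) :
    Nonempty (cokernel (Subobject.ofLE _ _ h) ≅ cokernel (Subobject.ofLE A B hAB)) := by
  refine ⟨cokernel.mapIso _ _ (Subobject.underlyingIso (A.arrow ≫ f))
    (Subobject.underlyingIso (B.arrow ≫ f)) ?_⟩
  rw [← cancel_mono (B.arrow ≫ f)]
  simp only [Category.assoc, Subobject.underlyingIso_hom_comp_eq_mk, Subobject.ofLE_arrow]
  rw [reassoc_of% Subobject.ofLE_arrow hAB, Subobject.underlyingIso_hom_comp_eq_mk]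

lemma Dev.filtration (hP : IsTopologizing P) {X : C} (h : Dev P X) :
    HasDevissageFiltration P X := by
  induction h with
  | zero X hX =>
    have htb : (⊤ : Subobject X) = ⊥ := by
      rw [← Subobject.mk_eq_top_of_isIso (𝟙 X), Subobject.mk_eq_bot_iff_zero]
      exact hX.eq_zero_of_src _
    exact ⟨0, fun _ => ⊤, fun i => i.elim0, rfl, htb, fun i => i.elim0⟩
  | step S hS h1 h3 ih =>
    obtain ⟨n, s, hsm, h0, hl, hq⟩ := ih
    have := hS.mono_f; have := hS.epi_g
    let push : Subobject S.X₁ → Subobject S.X₂ := fun A => Subobject.mk (A.arrow ≫ S.f)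
    have pushMono : ∀ {A B : Subobject S.X₁}, A ≤ B → push A ≤ push B := by
      intro A B hAB
      exact Subobject.mk_le_mk_of_comm (Subobject.ofLE A B hAB)
        (by rw [← Category.assoc, Subobject.ofLE_arrow])
    let t : Fin (n + 2) → Subobject S.X₂ := Fin.cases ⊤ (fun j => push (s j))
    have ht0 : t 0 = ⊤ := rfl
    have htsucc : ∀ j : Fin (n + 1), t j.succ = push (s j) := fun j => by
      simp [t, Fin.cases_succ]
    have htm : ∀ i : Fin (n + 1), t i.succ ≤ t i.castSucc := by
      intro i
      induction i using Fin.cases with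
      | zero => rw [htsucc]; exact le_top
      | succ j =>
        rw [htsucc, ← Fin.succ_castSucc, htsucc]
        exact pushMono (hsm j)
    refine ⟨n + 1, t, htm, ht0, ?_, ?_⟩
    · have : Fin.last (n + 1) = (Fin.last n).succ := (Fin.succ_last n).symm
      rw [this, htsucc, hl]
      show Subobject.mk ((⊥ : Subobject S.X₁).arrow ≫ S.f) = ⊥
      rw [Subobject.mk_eq_bot_iff_zero, Subobject.bot_arrow, zero_comp]
    · intro i
      induction i using Fin.cases with
      | zero =>
        refine ⟨S.X₃, h3, ?_⟩
        have e1 : t (0 : Fin (n+1)).succ = push (s 0) := htsucc 0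
        have e2 : t (0 : Fin (n+1)).castSucc = ⊤ := by
          rw [Fin.castSucc_zero]; exact ht0
        have key : ∀ (A B : Subobject S.X₂) (hAB : A ≤ B) (eA : A = push (s 0)) (eB : B = ⊤),
            Nonempty (cokernel (Subobject.ofLE A B hAB) ≅ S.X₃) := by
          intro A B hAB eA eB
          subst eA; subst eB
          have : push (s 0) = Subobject.mk S.f := by
            rw [h0]
            show Subobject.mk ((⊤ : Subobject S.X₁).arrow ≫ S.f) = Subobject.mk S.f
            exact Subobject.mk_eq_mk_of_comm _ _ (asIso ((⊤ : Subobject S.X₁).arrow)) (by simp)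
          have key2 : ∀ (A' : Subobject S.X₂) (eA' : A' = Subobject.mk S.f)
              (hAB' : A' ≤ ⊤), Nonempty (cokernel (Subobject.ofLE A' ⊤ hAB') ≅ S.X₃) := by
            intro A' eA' hAB'
            subst eA'
            obtain ⟨e⟩ := cok_ofLE_top S.f hAB'
            exact ⟨e ≪≫ IsColimit.coconePointUniqueUpToIso (cokernelIsCokernel S.f)
              hS.gIsCokernel⟩
          exact key2 _ this _
        exact key _ _ _ e1 e2
      | succ j =>
        obtain ⟨b, hb, ⟨eb⟩⟩ := hq j
        refine ⟨b, hb, ?_⟩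
        have e1 : t (j.succ).succ = push (s j.succ) := htsucc j.succ
        have e2 : t (j.succ).castSucc = push (s j.castSucc) := by
          rw [← Fin.succ_castSucc]; exact htsucc j.castSucc
        have key : ∀ (A B : Subobject S.X₂) (hAB : A ≤ B)
            (eA : A = push (s j.succ)) (eB : B = push (s j.castSucc)),
            Nonempty (cokernel (Subobject.ofLE A B hAB) ≅ b) := by
          intro A B hAB eA eB
          subst eA; subst eB
          obtain ⟨e⟩ := cok_ofLE_push S.f (s j.succ) (s j.castSucc) (hsm j) hAB
          exact ⟨e ≪≫ eb⟩
        exact key _ _ _ e1 e2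

lemma dev_of_filtration (hP : IsTopologizing P) {X : C} (h : HasDevissageFiltration P X) :
    Dev P X := by
  obtain ⟨n, s, hsm, h0, hl, hq⟩ := h
  have key : ∀ m : ℕ, ∀ hmn : m ≤ n, Dev P ((s ⟨n - m, by omega⟩ : Subobject X) : C) := by
    intro m
    induction m with
    | zero =>
      intro _
      have e : (⟨n - 0, by omega⟩ : Fin (n + 1)) = Fin.last n := by
        ext; simp [Fin.last]
      rw [e, hl]
      exact Dev.zero _ ((isZero_zero C).of_iso Subobject.botCoeIsoZero)
    | succ m ih =>
      intro hmn
      set i : Fin n := ⟨n - (m + 1), by omega⟩ with hi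
      have e2 : i.succ = (⟨n - m, by omega⟩ : Fin (n + 1)) := by
        ext; simp [hi, Fin.succ]; omega
      have hdev : Dev P ((s i.succ : Subobject X) : C) := by
        rw [e2]; exact ih (by omega)
      obtain ⟨b, hb, ⟨eb⟩⟩ := hq i
      have hstep := Dev.step _ (sesOfMono (Subobject.ofLE _ _ (hsm i))) hdev
        (hP.2.1 eb.symm hb)
      have e1 : i.castSucc = (⟨n - (m + 1), by omega⟩ : Fin (n + 1)) := by
        ext; simp [hi, Fin.castSucc]
      rw [← e1]
      exact hstep
  have hfin := key n (le_refl n)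
  have e : (⟨n - n, by omega⟩ : Fin (n + 1)) = 0 := by ext; simp
  rw [e, h0] at hfin
  exact hfin.of_iso (asIso (⊤ : Subobject X).arrow)

end DevissageAux

/-- Let `𝒜` be an abelian category all of whose objects are Noetherian and
`ℬ` a topologizing subcategory. Then the dévissage condition (every object admits a
finite filtration with subquotients in `ℬ`) holds if and only if the Serre radical of
`ℬ` is all of `𝒜`. -/
theorem stmt_16 [∀ X : C, IsNoetherianObject X]
    (P : C → Prop) (hP : IsTopologizing P) :
    (∀ X : C, HasDevissageFiltration P X) ↔ (∀ X : C, serreRadical P X) := by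
  constructor
  · intro h X Q hQ hPQ
    exact (DevissageAux.dev_of_filtration hP (h X)).serre Q hQ hPQ
  · intro h X
    exact DevissageAux.Dev.filtration hP
      (h X (DevissageAux.Dev P) (DevissageAux.Dev.isSerre hP)
        (fun Y hy => DevissageAux.Dev.of_P hP hy))
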